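/- arXiv:2107.09235 — 3 statements merged into one kernel-verified Lean document; each statement's English description precedes it below -/
import Mathlib

section
/- In the life-cycle measurement error model Y_{a} = λ^Y_a Y* + U^Y_a (for each age a in a finite set 𝒜), with A_Y the (random) age at which income is observed and Y = Y_{A_Y}: if (Y*, U^Y_{vec a}) ⫫ A_Y, E[U^Y_a] = 0 for all a, there exists a known age a* with λ^Y_{a*} = 1, and E[Y*] ≠ 0, then for every a ∈ 𝒜, λ^Y_a = E[Y | A_Y = a] / E[Y | A_Y = a*]. -/
open MeasureTheory ProbabilityTheory

lemma key_indep {Ω : Type*} [m0 : MeasurableSpace Ω] (μ : Measure Ω) [IsProbabilityMeasure μ]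
    {A : Type*} [MeasurableSpace A] [MeasurableSingletonClass A]
    (f : Ω → ℝ) (AY : Ω → A) (hf : Measurable f) (hAY : Measurable AY)
    (hindep : IndepFun f AY μ) (hfi : Integrable f μ) (a : A) :
    ∫ ω in {ω | AY ω = a}, f ω ∂μ = (∫ ω, f ω ∂μ) * (μ {ω | AY ω = a}).toReal := by
  have hs : MeasurableSet {ω | AY ω = a} := hAY (measurableSet_singleton a)
  set g : A → ℝ := ({a} : Set A).indicator (fun _ => (1:ℝ)) with hg
  have hgm : Measurable g := measurable_const.indicator (measurableSet_singleton a)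
  have hind2 : IndepFun f (fun ω => g (AY ω)) μ :=
    hindep.comp measurable_id hgm
  have h1 : (fun ω => f ω * g (AY ω)) = ({ω | AY ω = a}).indicator f := by
    funext ω
    by_cases h : AY ω = a <;>
      simp [hg, Set.indicator, h]
  have h2 : (fun ω => g (AY ω)) = ({ω | AY ω = a}).indicator (fun _ => (1:ℝ)) := by
    funext ω
    by_cases h : AY ω = a <;> simp [hg, Set.indicator, h]
  have hmul := IndepFun.integral_mul_eq_mul_integral hind2 hfi.aestronglyMeasurable
    (hgm.comp hAY).aestronglyMeasurable
  calc ∫ ω in {ω | AY ω = a}, f ω ∂μ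
      = ∫ ω, ({ω | AY ω = a}).indicator f ω ∂μ := (integral_indicator hs).symm
    _ = ∫ ω, f ω * g (AY ω) ∂μ := by rw [h1]
    _ = (∫ ω, f ω ∂μ) * ∫ ω, g (AY ω) ∂μ := hmul
    _ = (∫ ω, f ω ∂μ) * (μ {ω | AY ω = a}).toReal := by
        rw [h2, integral_indicator_const _ hs]; simp [mul_comm, Measure.real]

/-- Identification of life-cycle scaling factors (Proposition A.1): in the model
`Y_a = λ_a Y* + U_a` observed at a random age `A_Y` independent of `(Y*, U)`, with
mean-zero errors, a reference age `a*` with `λ_{a*} = 1` and `E[Y*] ≠ 0`,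
`λ_a = E[Y | A_Y = a] / E[Y | A_Y = a*]`. -/
theorem stmt_17 {Ω : Type*} [m0 : MeasurableSpace Ω] (μ : Measure Ω) [IsProbabilityMeasure μ]
    {A : Type*} [Fintype A] [MeasurableSpace A] [MeasurableSingletonClass A]
    (Ys : Ω → ℝ) (U : A → Ω → ℝ) (AY : Ω → A) (lam : A → ℝ) (Yobs : Ω → ℝ)
    (hYs : Measurable Ys) (hU : ∀ a, Measurable (U a)) (hAY : Measurable AY)
    (hobs : ∀ ω, Yobs ω = lam (AY ω) * Ys ω + U (AY ω) ω)
    (hindep : IndepFun (fun ω => (Ys ω, fun a => U a ω)) AY μ)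
    (hint : Integrable Ys μ) (hUint : ∀ a, Integrable (U a) μ)
    (hmean0 : ∀ a, ∫ ω, U a ω ∂μ = 0)
    (astar : A) (hstar : lam astar = 1)
    (hEYs : ∫ ω, Ys ω ∂μ ≠ 0)
    (hpos : ∀ a, 0 < μ {ω | AY ω = a}) :
    ∀ a : A, lam a
      = ((∫ ω in {ω | AY ω = a}, Yobs ω ∂μ) / (μ {ω | AY ω = a}).toReal)
        / ((∫ ω in {ω | AY ω = astar}, Yobs ω ∂μ) / (μ {ω | AY ω = astar}).toReal) := by
  have hYsAY : IndepFun Ys AY μ := by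
    have := hindep.comp (measurable_fst (β := A → ℝ)) measurable_id
    exact this
  have hUAY : ∀ a, IndepFun (U a) AY μ := fun a => by
    have := hindep.comp ((measurable_pi_apply a).comp (measurable_snd (α := ℝ))) measurable_id
    exact this
  -- main computation of the set integral
  have hmain : ∀ a : A, ∫ ω in {ω | AY ω = a}, Yobs ω ∂μ
      = lam a * (∫ ω, Ys ω ∂μ) * (μ {ω | AY ω = a}).toReal := by
    intro a
    have hs : MeasurableSet {ω | AY ω = a} := hAY (measurableSet_singleton a)
    have hcong : ∫ ω in {ω | AY ω = a}, Yobs ω ∂μ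
        = ∫ ω in {ω | AY ω = a}, (lam a * Ys ω + U a ω) ∂μ := by
      apply setIntegral_congr_fun hs
      intro ω hω
      simp only [Set.mem_setOf_eq] at hω
      rw [hobs ω, hω]
    rw [hcong]
    have hi1 : Integrable (fun ω => lam a * Ys ω) (μ.restrict {ω | AY ω = a}) :=
      ((hint.const_mul (lam a)).restrict)
    have hi2 : Integrable (U a) (μ.restrict {ω | AY ω = a}) := (hUint a).restrict
    rw [integral_add hi1 hi2, integral_const_mul,
      key_indep μ Ys AY hYs hAY hYsAY hint a,
      key_indep μ (U a) AY (hU a) hAY (hUAY a) (hUint a) a,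
      hmean0 a]
    ring
  intro a
  have hne : ∀ b : A, (μ {ω | AY ω = b}).toReal ≠ 0 := fun b => by
    have h1 : μ {ω | AY ω = b} ≠ 0 := (hpos b).ne'
    have h2 : μ {ω | AY ω = b} ≠ ⊤ := (measure_ne_top μ _)
    exact ENNReal.toReal_ne_zero.mpr ⟨h1, h2⟩
  rw [hmain a, hmain astar, hstar,
    mul_div_cancel_right₀ _ (hne a), mul_div_cancel_right₀ _ (hne astar),
    one_mul, mul_div_assoc, div_self hEYs, mul_one]
end

section
/- In the life-cycle measurement error model, suppose: (i) (Y*, T*, U^Y_{vec a_Y}, U^T_{vec a_T}, X) ⫫ (A_Y, A_T); (ii) for all ages (a_Y, a_T), (U^Y_{a_Y}, U^T_{a_T}) ⫫ (Y*, T*, X); (iii) for all ages, U^Y_{a_Y} ⫫ U^T_{a_T}. Define Ũ^Y = U^Y_{A_Y} / λ^Y_{A_Y} and Ũ^T = U^T_{A_T} / λ^T_{A_T} (with λ's nonzero constants per age). Then (Ũ^Y, Ũ^T) ⫫ (Y*, T*, X). -/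
open MeasureTheory ProbabilityTheory

/-- Partition a measure over the fibers of a measurable map into a finite type. -/
lemma partition_lemma {Ω : Type*} [MeasurableSpace Ω] (μ : MeasureTheory.Measure Ω)
    {B : Type*} [Fintype B] [MeasurableSpace B] [MeasurableSingletonClass B]
    (P : Ω → B) (hP : Measurable P) (W : Set Ω) (hW : MeasurableSet W) :
    μ W = ∑ b : B, μ (W ∩ P ⁻¹' {b}) := by
  have hU : W = ⋃ b : B, W ∩ P ⁻¹' {b} := by
    ext ω; simp
  have hd : Pairwise (Function.onFun Disjoint (fun b => W ∩ P ⁻¹' {b})) := by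
    intro b b' hbb'
    simp only [Function.onFun, Set.disjoint_left]
    rintro ω ⟨-, hb⟩ ⟨-, hb'⟩
    exact hbb' (hb.symm.trans hb')
  have hm : ∀ b : B, MeasurableSet (W ∩ P ⁻¹' {b}) :=
    fun b => hW.inter (hP (measurableSet_singleton b))
  conv_lhs => rw [hU]
  rw [measure_iUnion hd hm, tsum_fintype]

/-- Proposition A.2, first claim: in the life-cycle measurement error model, the rescaled
measurement errors `Ũ^Y = U^Y_{A_Y}/λ^Y_{A_Y}` and `Ũ^T = U^T_{A_T}/λ^T_{A_T}` are jointly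
independent of `(Y*, T*, X)`. -/
theorem stmt_18 {Ω : Type*} [m0 : MeasurableSpace Ω] (μ : Measure Ω) [IsProbabilityMeasure μ]
    {A : Type*} [Fintype A] [MeasurableSpace A] [MeasurableSingletonClass A]
    {γ : Type*} [MeasurableSpace γ]
    (Ys Ts : Ω → ℝ) (X : Ω → γ)
    (UY UT : A → Ω → ℝ) (AY AT : Ω → A) (lamY lamT : A → ℝ)
    (hYs : Measurable Ys) (hTs : Measurable Ts) (hX : Measurable X)
    (hUY : ∀ a, Measurable (UY a)) (hUT : ∀ a, Measurable (UT a))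
    (hAY : Measurable AY) (hAT : Measurable AT)
    (hlamY : ∀ a, lamY a ≠ 0) (hlamT : ∀ a, lamT a ≠ 0)
    (hindepA : IndepFun
      (fun ω => (Ys ω, Ts ω, (fun a => UY a ω), (fun a => UT a ω), X ω))
      (fun ω => (AY ω, AT ω)) μ)
    (hindepU : ∀ aY aT : A,
      IndepFun (fun ω => (UY aY ω, UT aT ω)) (fun ω => (Ys ω, Ts ω, X ω)) μ)
    (hUUindep : ∀ aY aT : A, IndepFun (UY aY) (UT aT) μ) :
    IndepFun
      (fun ω => (UY (AY ω) ω / lamY (AY ω), UT (AT ω) ω / lamT (AT ω)))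
      (fun ω => (Ys ω, Ts ω, X ω)) μ := by
  -- notation
  set f : Ω → ℝ × ℝ := fun ω => (UY (AY ω) ω / lamY (AY ω), UT (AT ω) ω / lamT (AT ω)) with hf
  set g : Ω → ℝ × ℝ × γ := fun ω => (Ys ω, Ts ω, X ω) with hg
  set P : Ω → A × A := fun ω => (AY ω, AT ω) with hP
  have hPmeas : Measurable P := hAY.prodMk hAT
  -- frozen-age versions
  set F : A × A → Ω → ℝ × ℝ :=
    fun p ω => (UY p.1 ω / lamY p.1, UT p.2 ω / lamT p.2) with hF
  have hFmeas : ∀ p : A × A, Measurable (F p) := fun p =>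
    ((hUY p.1).div_const _).prodMk ((hUT p.2).div_const _)
  have hgmeas : Measurable g := hYs.prodMk (hTs.prodMk hX)
  -- measurability of f
  have haux : ∀ (V : A → Ω → ℝ) (Aee : Ω → A), (∀ a, Measurable (V a)) → Measurable Aee →
      Measurable (fun ω => V (Aee ω) ω) := by
    intro V Ae hV hAe
    classical
    have h : (fun ω => V (Ae ω) ω) = fun ω => ∑ a : A, if Ae ω = a then V a ω else 0 := by
      funext ω
      rw [Finset.sum_ite_eq Finset.univ (Ae ω) (fun a => V a ω)]
      simp
    rw [h]
    exact Finset.measurable_sum _ fun a _ =>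
      Measurable.ite (hAe (measurableSet_singleton a)) (hV a) measurable_const
  have hfmeas : Measurable f := by
    refine Measurable.prodMk ?_ ?_
    · exact (haux UY AY hUY hAY).div (haux (fun a _ => lamY a) AY
        (fun a => measurable_const) hAY)
    · exact (haux UT AT hUT hAT).div (haux (fun a _ => lamT a) AT
        (fun a => measurable_const) hAT)
  -- key independence facts for each frozen age pair
  have hFg_P : ∀ p : A × A, IndepFun (fun ω => (F p ω, g ω)) P μ := by
    intro p
    have hφ : Measurable (fun q : ℝ × ℝ × (A → ℝ) × (A → ℝ) × γ =>
        ((q.2.2.1 p.1 / lamY p.1, q.2.2.2.1 p.2 / lamT p.2),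
          (q.1, q.2.1, q.2.2.2.2))) := by
      refine Measurable.prodMk (Measurable.prodMk ?_ ?_) (Measurable.prodMk ?_
          (Measurable.prodMk ?_ ?_)) <;>
        fun_prop
    exact hindepA.comp hφ measurable_id
  have hFg : ∀ p : A × A, IndepFun (F p) g μ := by
    intro p
    have hψ : Measurable (fun q : ℝ × ℝ =>
        (q.1 / lamY p.1, q.2 / lamT p.2)) := by fun_prop
    exact (hindepU p.1 p.2).comp hψ measurable_id
  have hF_P : ∀ p : A × A, IndepFun (F p) P μ := by
    intro p
    have hφ : Measurable (fun q : ℝ × ℝ × (A → ℝ) × (A → ℝ) × γ =>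
        (q.2.2.1 p.1 / lamY p.1, q.2.2.2.1 p.2 / lamT p.2)) := by fun_prop
    exact hindepA.comp hφ measurable_id
  -- now prove independence via measures of preimages
  rw [indepFun_iff_measure_inter_preimage_eq_mul]
  intro s t hs ht
  -- on the fiber {P = p}, f coincides with F p
  have hfiber : ∀ (p : A × A) (W : Set Ω),
      f ⁻¹' s ∩ W ∩ P ⁻¹' {p} = F p ⁻¹' s ∩ W ∩ P ⁻¹' {p} := by
    intro p W
    ext ω
    simp only [Set.mem_inter_iff, Set.mem_preimage, Set.mem_singleton_iff, hP]
    constructor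
    · rintro ⟨⟨h1, h2⟩, h3⟩
      refine ⟨⟨?_, h2⟩, h3⟩
      have h1' : AY ω = p.1 := by rw [Prod.ext_iff] at h3; exact h3.1
      have h2' : AT ω = p.2 := by rw [Prod.ext_iff] at h3; exact h3.2
      simpa [hf, hF, h1', h2'] using h1
    · rintro ⟨⟨h1, h2⟩, h3⟩
      refine ⟨⟨?_, h2⟩, h3⟩
      have h1' : AY ω = p.1 := by rw [Prod.ext_iff] at h3; exact h3.1
      have h2' : AT ω = p.2 := by rw [Prod.ext_iff] at h3; exact h3.2
      simpa [hf, hF, h1', h2'] using h1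
  -- factorization on each fiber
  have hterm : ∀ p : A × A,
      μ (f ⁻¹' s ∩ g ⁻¹' t ∩ P ⁻¹' {p}) = μ (F p ⁻¹' s) * μ (g ⁻¹' t) * μ (P ⁻¹' {p}) := by
    intro p
    rw [hfiber p (g ⁻¹' t)]
    have h1 : F p ⁻¹' s ∩ g ⁻¹' t = (fun ω => (F p ω, g ω)) ⁻¹' (s ×ˢ t) := by
      ext ω; simp [Set.mem_prod]
    have h2 := (indepFun_iff_measure_inter_preimage_eq_mul.mp (hFg_P p))
      (s ×ˢ t) {p} (hs.prod ht) (measurableSet_singleton p)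
    rw [h1, h2, ← h1]
    have h3 := (indepFun_iff_measure_inter_preimage_eq_mul.mp (hFg p)) s t hs ht
    rw [h3]
  have htermf : ∀ p : A × A,
      μ (f ⁻¹' s ∩ P ⁻¹' {p}) = μ (F p ⁻¹' s) * μ (P ⁻¹' {p}) := by
    intro p
    have := hfiber p Set.univ
    simp only [Set.inter_univ] at this
    rw [this]
    exact (indepFun_iff_measure_inter_preimage_eq_mul.mp (hF_P p)) s {p} hs
      (measurableSet_singleton p)
  -- partition and conclude
  rw [partition_lemma μ P hPmeas (f ⁻¹' s ∩ g ⁻¹' t) ((hfmeas hs).inter (hgmeas ht)),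
    partition_lemma μ P hPmeas (f ⁻¹' s) (hfmeas hs)]
  calc ∑ p : A × A, μ (f ⁻¹' s ∩ g ⁻¹' t ∩ P ⁻¹' {p})
      = ∑ p : A × A, μ (F p ⁻¹' s) * μ (g ⁻¹' t) * μ (P ⁻¹' {p}) := by
        exact Finset.sum_congr rfl fun p _ => hterm p
    _ = (∑ p : A × A, μ (F p ⁻¹' s) * μ (P ⁻¹' {p})) * μ (g ⁻¹' t) := by
        rw [Finset.sum_mul]; exact Finset.sum_congr rfl fun p _ => by ring
    _ = (∑ p : A × A, μ (f ⁻¹' s ∩ P ⁻¹' {p})) * μ (g ⁻¹' t) := by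
        congr 1; exact Finset.sum_congr rfl fun p _ => (htermf p).symm
end

section
/- In the life-cycle measurement error model, suppose: (i) (Y*, T*, U^Y_{vec a_Y}, U^T_{vec a_T}, X) ⫫ (A_Y, A_T); (ii) for all ages (a_Y, a_T), U^Y_{a_Y} ⫫ U^T_{a_T}; and (iii) the distribution of U^Y_{a_Y}/λ^Y_{a_Y} is the same for every age a_Y. Then the rescaled measurement errors Ũ^Y = U^Y_{A_Y}/λ^Y_{A_Y} and Ũ^T = U^T_{A_T}/λ^T_{A_T} are independent of each other. -/
open MeasureTheory ProbabilityTheory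

/-- Decompose the measure of a set along the fibers of a map into a finite type. -/
lemma stmt_19_decomp {Ω : Type*} [MeasurableSpace Ω] (μ : Measure Ω)
    {B : Type*} [Fintype B] [MeasurableSpace B] [MeasurableSingletonClass B]
    {g : Ω → B} (hg : Measurable g) (S : Set Ω) (hS : MeasurableSet S) :
    μ S = ∑ b : B, μ (S ∩ g ⁻¹' {b}) := by
  have h1 : S = ⋃ b : B, S ∩ g ⁻¹' {b} := by ext ω; simp
  have h2 : Pairwise (Function.onFun Disjoint fun b : B => S ∩ g ⁻¹' {b}) := by
    intro b b' hbb'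
    refine Set.disjoint_left.2 ?_
    rintro ω ⟨-, hb⟩ ⟨-, hb'⟩
    exact hbb' (hb.symm.trans hb')
  conv_lhs => rw [h1]
  rw [measure_iUnion h2 (fun b => hS.inter (hg (measurableSet_singleton b))), tsum_fintype]

/-- Proposition A.2, second claim: in the life-cycle measurement error model, if the
rescaled child measurement error has an age-invariant distribution, then the rescaled
errors `Ũ^Y = U^Y_{A_Y}/λ^Y_{A_Y}` and `Ũ^T = U^T_{A_T}/λ^T_{A_T}` are independent. -/
theorem stmt_19 {Ω : Type*} [m0 : MeasurableSpace Ω] (μ : Measure Ω) [IsProbabilityMeasure μ]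
    {A : Type*} [Fintype A] [MeasurableSpace A] [MeasurableSingletonClass A]
    {γ : Type*} [MeasurableSpace γ]
    (Ys Ts : Ω → ℝ) (X : Ω → γ)
    (UY UT : A → Ω → ℝ) (AY AT : Ω → A) (lamY lamT : A → ℝ)
    (hYs : Measurable Ys) (hTs : Measurable Ts) (hX : Measurable X)
    (hUY : ∀ a, Measurable (UY a)) (hUT : ∀ a, Measurable (UT a))
    (hAY : Measurable AY) (hAT : Measurable AT)
    (hlamY : ∀ a, lamY a ≠ 0) (hlamT : ∀ a, lamT a ≠ 0)
    (hindepA : IndepFun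
      (fun ω => (Ys ω, Ts ω, (fun a => UY a ω), (fun a => UT a ω), X ω))
      (fun ω => (AY ω, AT ω)) μ)
    (hUUindep : ∀ aY aT : A, IndepFun (UY aY) (UT aT) μ)
    (hsame : ∀ a a' : A,
      Measure.map (fun ω => UY a ω / lamY a) μ
        = Measure.map (fun ω => UY a' ω / lamY a') μ) :
    IndepFun (fun ω => UY (AY ω) ω / lamY (AY ω))
      (fun ω => UT (AT ω) ω / lamT (AT ω)) μ := by
  classical
  -- Ω and A are nonempty
  have hΩ : Nonempty Ω := by
    by_contra h
    rw [not_nonempty_iff] at h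
    have h1 : (μ Set.univ) = 1 := measure_univ
    rw [Set.univ_eq_empty_iff.2 h] at h1
    simp at h1
  obtain ⟨ω0⟩ := hΩ
  have a0 : A := AY ω0
  -- measurability of the rescaled errors
  have mUYd : ∀ a, Measurable fun ω => UY a ω / lamY a := fun a => (hUY a).div_const _
  have mUTd : ∀ a, Measurable fun ω => UT a ω / lamT a := fun a => (hUT a).div_const _
  have mtY : Measurable fun ω => UY (AY ω) ω / lamY (AY ω) := by
    have h : Measurable fun p : Ω × A => UY p.2 p.1 / lamY p.2 :=
      measurable_from_prod_countable_left fun a => mUYd a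
    exact h.comp (measurable_id.prodMk hAY)
  have mtT : Measurable fun ω => UT (AT ω) ω / lamT (AT ω) := by
    have h : Measurable fun p : Ω × A => UT p.2 p.1 / lamT p.2 :=
      measurable_from_prod_countable_left fun a => mUTd a
    exact h.comp (measurable_id.prodMk hAT)
  set AYT : Ω → A × A := fun ω => (AY ω, AT ω) with hAYT
  have mAYT : Measurable AYT := hAY.prodMk hAT
  -- independence of (rescaled errors at fixed ages) with (A_Y, A_T)
  have hpair : ∀ a b : A,
      IndepFun (fun ω => (UY a ω / lamY a, UT b ω / lamT b)) AYT μ := by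
    intro a b
    have hφ : Measurable fun q : ℝ × ℝ × (A → ℝ) × (A → ℝ) × γ =>
        (q.2.2.1 a / lamY a, q.2.2.2.1 b / lamT b) :=
      (((measurable_pi_apply a).comp measurable_snd.snd.fst).div_const _).prodMk
        (((measurable_pi_apply b).comp measurable_snd.snd.snd.fst).div_const _)
    have := hindepA.comp hφ measurable_id
    simpa [Function.comp_def] using this
  have hUU : ∀ a b : A,
      IndepFun (fun ω => UY a ω / lamY a) (fun ω => UT b ω / lamT b) μ := by
    intro a b
    have := (hUUindep a b).comp (measurable_id.div_const (lamY a))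
      (measurable_id.div_const (lamT b))
    simpa [Function.comp_def] using this
  rw [indepFun_iff_measure_inter_preimage_eq_mul]
  intro s t hs ht
  set pY : A → ENNReal := fun a => μ ((fun ω => UY a ω / lamY a) ⁻¹' s) with hpY
  set pT : A → ENNReal := fun b => μ ((fun ω => UT b ω / lamT b) ⁻¹' t) with hpT
  -- age invariance of pY
  have hpYc : ∀ a, pY a = pY a0 := by
    intro a
    have e : ∀ a' : A, (μ.map (fun ω => UY a' ω / lamY a')) s = pY a' := fun a' =>
      Measure.map_apply (mUYd a') hs
    rw [← e a, ← e a0, hsame a a0]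
  -- the key per-fiber computation
  have key : ∀ p : A × A,
      μ (((fun ω => UY (AY ω) ω / lamY (AY ω)) ⁻¹' s
          ∩ (fun ω => UT (AT ω) ω / lamT (AT ω)) ⁻¹' t) ∩ AYT ⁻¹' {p})
        = pY a0 * pT p.2 * μ (AYT ⁻¹' {p}) := by
    intro p
    have hEq : ((fun ω => UY (AY ω) ω / lamY (AY ω)) ⁻¹' s
          ∩ (fun ω => UT (AT ω) ω / lamT (AT ω)) ⁻¹' t) ∩ AYT ⁻¹' {p}
        = (fun ω => (UY p.1 ω / lamY p.1, UT p.2 ω / lamT p.2)) ⁻¹' (s ×ˢ t)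
          ∩ AYT ⁻¹' {p} := by
      ext ω
      simp only [Set.mem_inter_iff, Set.mem_preimage, Set.mem_singleton_iff, Set.mem_prod,
        hAYT, Prod.ext_iff]
      constructor
      · rintro ⟨⟨h1, h2⟩, h3, h4⟩
        refine ⟨⟨?_, ?_⟩, h3, h4⟩
        · rw [← h3]; exact h1
        · rw [← h4]; exact h2
      · rintro ⟨⟨h1, h2⟩, h3, h4⟩
        refine ⟨⟨?_, ?_⟩, h3, h4⟩
        · rw [h3]; exact h1
        · rw [h4]; exact h2
    rw [hEq, (hpair p.1 p.2).measure_inter_preimage_eq_mul (s ×ˢ t)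
      {p} (hs.prod ht) (measurableSet_singleton p), Set.mk_preimage_prod,
      (hUU p.1 p.2).measure_inter_preimage_eq_mul s t hs ht]
    show pY p.1 * pT p.2 * μ (AYT ⁻¹' {p}) = pY a0 * pT p.2 * μ (AYT ⁻¹' {p})
    rw [hpYc p.1]
  -- decompose the left-hand side
  have hLHS : μ ((fun ω => UY (AY ω) ω / lamY (AY ω)) ⁻¹' s
      ∩ (fun ω => UT (AT ω) ω / lamT (AT ω)) ⁻¹' t)
      = ∑ p : A × A, pY a0 * pT p.2 * μ (AYT ⁻¹' {p}) := by
    rw [stmt_19_decomp μ mAYT _ ((mtY hs).inter (mtT ht))]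
    exact Finset.sum_congr rfl fun p _ => key p
  -- first marginal
  have hY1 : ∀ a : A, μ ((fun ω => UY (AY ω) ω / lamY (AY ω)) ⁻¹' s ∩ AY ⁻¹' {a})
      = pY a0 * μ (AY ⁻¹' {a}) := by
    intro a
    have hEq : (fun ω => UY (AY ω) ω / lamY (AY ω)) ⁻¹' s ∩ AY ⁻¹' {a}
        = (fun ω => UY a ω / lamY a) ⁻¹' s ∩ AY ⁻¹' {a} := by
      ext ω
      simp only [Set.mem_inter_iff, Set.mem_preimage, Set.mem_singleton_iff]
      constructor
      · rintro ⟨h1, h2⟩; exact ⟨by rw [← h2]; exact h1, h2⟩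
      · rintro ⟨h1, h2⟩; exact ⟨by rw [h2]; exact h1, h2⟩
    have hInd : IndepFun (fun ω => UY a ω / lamY a) AY μ := by
      have := (hpair a a0).comp measurable_fst measurable_fst
      simpa [Function.comp_def, hAYT] using this
    rw [hEq, hInd.measure_inter_preimage_eq_mul s {a} hs (measurableSet_singleton a)]
    show pY a * μ (AY ⁻¹' {a}) = pY a0 * μ (AY ⁻¹' {a})
    rw [hpYc a]
  have hT1 : ∀ b : A, μ ((fun ω => UT (AT ω) ω / lamT (AT ω)) ⁻¹' t ∩ AT ⁻¹' {b})
      = pT b * μ (AT ⁻¹' {b}) := by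
    intro b
    have hEq : (fun ω => UT (AT ω) ω / lamT (AT ω)) ⁻¹' t ∩ AT ⁻¹' {b}
        = (fun ω => UT b ω / lamT b) ⁻¹' t ∩ AT ⁻¹' {b} := by
      ext ω
      simp only [Set.mem_inter_iff, Set.mem_preimage, Set.mem_singleton_iff]
      constructor
      · rintro ⟨h1, h2⟩; exact ⟨by rw [← h2]; exact h1, h2⟩
      · rintro ⟨h1, h2⟩; exact ⟨by rw [h2]; exact h1, h2⟩
    have hInd : IndepFun (fun ω => UT b ω / lamT b) AT μ := by
      have := (hpair a0 b).comp measurable_snd measurable_snd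
      simpa [Function.comp_def, hAYT] using this
    rw [hEq, hInd.measure_inter_preimage_eq_mul t {b} ht (measurableSet_singleton b)]
  have hMY : μ ((fun ω => UY (AY ω) ω / lamY (AY ω)) ⁻¹' s) = pY a0 := by
    rw [stmt_19_decomp μ hAY _ (mtY hs)]
    calc ∑ a : A, μ ((fun ω => UY (AY ω) ω / lamY (AY ω)) ⁻¹' s ∩ AY ⁻¹' {a})
        = ∑ a : A, pY a0 * μ (AY ⁻¹' {a}) := Finset.sum_congr rfl fun a _ => hY1 a
      _ = pY a0 * ∑ a : A, μ (AY ⁻¹' {a}) := by rw [Finset.mul_sum]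
      _ = pY a0 * μ (Set.univ) := by
            congr 1
            rw [stmt_19_decomp μ hAY Set.univ MeasurableSet.univ]
            simp
      _ = pY a0 := by simp
  have hMT : μ ((fun ω => UT (AT ω) ω / lamT (AT ω)) ⁻¹' t)
      = ∑ b : A, pT b * μ (AT ⁻¹' {b}) := by
    rw [stmt_19_decomp μ hAT _ (mtT ht)]
    exact Finset.sum_congr rfl fun b _ => hT1 b
  -- fiber measures over A × A collapse to the second marginal
  have hfib : ∀ b : A, ∑ a : A, μ (AYT ⁻¹' {(a, b)}) = μ (AT ⁻¹' {b}) := by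
    intro b
    rw [stmt_19_decomp μ hAY (AT ⁻¹' {b}) (hAT (measurableSet_singleton b))]
    refine Finset.sum_congr rfl fun a _ => ?_
    congr 1
    ext ω
    simp only [Set.mem_inter_iff, Set.mem_preimage, Set.mem_singleton_iff, hAYT, Prod.ext_iff]
    tauto
  rw [hLHS, hMY, hMT, Finset.mul_sum]
  rw [Fintype.sum_prod_type, Finset.sum_comm]
  refine Finset.sum_congr rfl fun b _ => ?_
  calc ∑ a : A, pY a0 * pT b * μ (AYT ⁻¹' {(a, b)})
      = pY a0 * pT b * ∑ a : A, μ (AYT ⁻¹' {(a, b)}) := by rw [Finset.mul_sum]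
    _ = pY a0 * (pT b * μ (AT ⁻¹' {b})) := by rw [hfib b, mul_assoc]
end
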